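/- Let N ≥ 3, let A ∈ ℝ^{N×N} be symmetric with eigenvalues λ₁(A) ≥ λ₂(A) ≥ … ≥ λ_N(A), and let W be the span of two orthonormal eigenvectors of A associated with λ₁(A) and λ₂(A). Let v ∈ ℝ^N have all entries in {+1/√N, −1/√N}, let u ∈ ℝ^N be a unit vector with ⟨u, v⟩ = 0, assume P_W u ≠ 0, and let w ∈ W be a unit vector with ⟨w, P_W u⟩ = 0 and ⟨w, v⟩ ≥ 0. Then for any λ, μ > λ₃(A): (1/4)·‖(1/√N)·sgn(w) − v‖² ≤ 8·( ‖Au − λu‖²/(λ − λ₃(A))² + ‖Av − μv‖²/(μ − λ₃(A))² ), where sgn is applied entrywise with sgn(x) = 1 for x ≥ 0 and sgn(x) = −1 for x < 0. -/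

import Mathlib

open scoped RealInnerProductSpace

/-- Entrywise sign vector: `sgn(x) = 1` if `x ≥ 0`, and `−1` if `x < 0`. -/
noncomputable def sgnVec {N : ℕ} (x : EuclideanSpace ℝ (Fin N)) : EuclideanSpace ℝ (Fin N) :=
  WithLp.toLp 2 (fun i => if 0 ≤ x i then 1 else -1)

private lemma aux_sq_le (a b t : ℝ) (h1 : b ≤ a) (h2 : a < t) : (t - a) ^ 2 ≤ (b - t) ^ 2 := by
  nlinarith

private lemma aux_norm_one (x : ℝ) (h0 : 0 ≤ x) (h1 : x ^ 2 = 1) : x = 1 := by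
  nlinarith

private lemma aux_entry4 (r q s t : ℝ) (hq : r ^ 2 = q) (hs : s = r ∨ s = -r)
    (ht : t = r ∨ t = -r) : (s - t) ^ 2 ≤ 4 * q := by
  rcases hs with rfl | rfl <;> rcases ht with rfl | rfl <;> nlinarith

private lemma aux_sign (c r wi sg : ℝ) (hc : 0 ≤ c) (hr : 0 ≤ r)
    (hsg : (sg = 1 ∧ 0 ≤ wi) ∨ (sg = -1 ∧ wi ≤ 0)) :
    c ^ 2 * (r * sg - r) ^ 2 ≤ 4 * (wi - c * r) ^ 2 ∧
    c ^ 2 * (r * sg - -r) ^ 2 ≤ 4 * (wi - c * -r) ^ 2 := by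
  rcases hsg with ⟨rfl, hw⟩ | ⟨rfl, hw⟩
  · constructor
    · nlinarith [sq_nonneg (wi - c * r)]
    · nlinarith [mul_nonneg hc hr, sq_nonneg wi, mul_nonneg (mul_nonneg hc hr) hw]
  · constructor
    · nlinarith [mul_nonneg hc hr, sq_nonneg wi, mul_nonneg (mul_nonneg hc hr) (neg_nonneg.mpr hw)]
    · nlinarith [sq_nonneg (wi + c * r)]

private lemma aux_endgame (S c bb Du Dv X Y : ℝ) (hS0 : 0 ≤ S) (hS4 : S ≤ 4)
    (hkey : c ^ 2 * S ≤ 4 * (1 - c ^ 2)) (hkb : bb + c ^ 2 = 1 - Dv)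
    (hb2 : bb * (1 - Du) ≤ Du * Dv) (hbb0 : 0 ≤ bb) (hDu0 : 0 ≤ Du) (hDv0 : 0 ≤ Dv)
    (hDuX : Du ≤ X) (hDvY : Dv ≤ Y) (hX0 : 0 ≤ X) (hY0 : 0 ≤ Y) :
    (1 / 4) * S ≤ 8 * (X + Y) := by
  by_cases hbig : 1/8 ≤ X + Y
  · linarith
  · push_neg at hbig
    have hDu8 : Du < 1/8 := by linarith
    have hDv8 : Dv < 1/8 := by linarith
    have hb7 : 7 * bb ≤ Dv := by
      nlinarith [mul_nonneg hbb0 (show (0:ℝ) ≤ 1/8 - Du by linarith),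
        mul_nonneg hDv0 (show (0:ℝ) ≤ 1/8 - Du by linarith)]
    have hcsq : 6/7 ≤ c ^ 2 := by linarith
    have hS' : S ≤ (16/3) * Dv := by
      nlinarith [mul_nonneg (show (0:ℝ) ≤ c ^ 2 - 6/7 by linarith) hS0]
    linarith

set_option maxHeartbeats 1000000 in
/-- Let `A ∈ ℝ^{N×N}` (`N ≥ 3`) be symmetric with eigenvalues
`λ₁(A) ≥ … ≥ λ_N(A)` (encoded by an orthonormal eigenbasis `B` and antitone sequence `ev`),
and `W` the span of eigenvectors associated with `λ₁(A)`, `λ₂(A)`.  Let `v` have entries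
`±1/√N`, `u` a unit vector with `⟨u,v⟩ = 0`, `P_W u ≠ 0`, and `w ∈ W` a unit vector with
`⟨w, P_W u⟩ = 0` and `⟨w, v⟩ ≥ 0`.  Then for any `λ, μ > λ₃(A)`:
`(1/4)·‖(1/√N)·sgn(w) − v‖² ≤ 8·( ‖Au − λu‖²/(λ−λ₃)² + ‖Av − μv‖²/(μ−λ₃)² )`. -/
theorem statement_13
    (N : ℕ) (hN : 3 ≤ N)
    (A : Matrix (Fin N) (Fin N) ℝ) (hA : A.IsSymm)
    (ev : Fin N → ℝ) (B : Fin N → EuclideanSpace ℝ (Fin N))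
    (hev : Antitone ev) (hB : Orthonormal ℝ B)
    (heig : ∀ i, Matrix.toEuclideanLin A (B i) = ev i • B i)
    (W : Submodule ℝ (EuclideanSpace ℝ (Fin N)))
    (hW : W = Submodule.span ℝ (B '' {i : Fin N | (i : ℕ) < 2}))
    (v u : EuclideanSpace ℝ (Fin N))
    (hv : ∀ i, v i = (Real.sqrt N)⁻¹ ∨ v i = -(Real.sqrt N)⁻¹)
    (hu : ‖u‖ = 1) (huv : ⟪u, v⟫ = 0)
    (hPu : (W.orthogonalProjection u : EuclideanSpace ℝ (Fin N)) ≠ 0)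
    (w : EuclideanSpace ℝ (Fin N)) (hwW : w ∈ W) (hw : ‖w‖ = 1)
    (hwu : ⟪w, (W.orthogonalProjection u : EuclideanSpace ℝ (Fin N))⟫ = 0)
    (hwv : 0 ≤ ⟪w, v⟫)
    (lam mu : ℝ) (hlam : lam > ev ⟨2, by omega⟩) (hmu : mu > ev ⟨2, by omega⟩) :
    (1 / 4) * ‖(Real.sqrt N)⁻¹ • sgnVec w - v‖ ^ 2 ≤
      8 * (‖Matrix.toEuclideanLin A u - lam • u‖ ^ 2 / (lam - ev ⟨2, by omega⟩) ^ 2 +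
           ‖Matrix.toEuclideanLin A v - mu • v‖ ^ 2 / (mu - ev ⟨2, by omega⟩) ^ 2) := by
  -- indices
  set i0 : Fin N := ⟨0, by omega⟩ with hi0def
  set i1 : Fin N := ⟨1, by omega⟩ with hi1def
  set i2 : Fin N := ⟨2, by omega⟩ with hi2def
  have hlam' : ev i2 < lam := hlam
  have hmu' : ev i2 < mu := hmu
  have hne01 : i0 ≠ i1 := by simp [hi0def, hi1def, Fin.ext_iff]
  have hNpos : (0:ℝ) < N := by
    have : (0:ℕ) < N := by omega
    exact_mod_cast this
  -- orthonormal basis machinery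
  have hNe : Nonempty (Fin N) := ⟨i0⟩
  have hcard : Fintype.card (Fin N) = Module.finrank ℝ (EuclideanSpace ℝ (Fin N)) := by simp
  have hspan : ⊤ ≤ Submodule.span ℝ (Set.range B) :=
    (hB.linearIndependent.span_eq_top_of_card_eq_finrank hcard).ge
  set b : OrthonormalBasis (Fin N) ℝ (EuclideanSpace ℝ (Fin N)) := .mk hB hspan with hbdef
  have hb : ∀ i, b i = B i := fun i => by rw [hbdef, OrthonormalBasis.coe_mk]
  have hBij : ∀ i j, ⟪B i, B j⟫ = if i = j then (1:ℝ) else 0 := orthonormal_iff_ite.mp hB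
  have parseval : ∀ x y : EuclideanSpace ℝ (Fin N), ⟪x, y⟫ = ∑ i, ⟪B i, x⟫ * ⟪B i, y⟫ := by
    intro x y
    rw [← b.repr.inner_map_map x y, PiLp.inner_apply]
    refine Finset.sum_congr rfl fun i _ => ?_
    rw [RCLike.inner_apply, conj_trivial, OrthonormalBasis.repr_apply_apply,
      OrthonormalBasis.repr_apply_apply, hb, mul_comm]
  have normsq : ∀ x : EuclideanSpace ℝ (Fin N), ‖x‖ ^ 2 = ∑ i, ⟪B i, x⟫ ^ 2 := by
    intro x
    rw [← real_inner_self_eq_norm_sq, parseval]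
    simp [sq]
  -- splitting sums
  set Tset : Finset (Fin N) := Finset.univ.filter (fun i : Fin N => 2 ≤ (i : ℕ)) with hTdef
  have sum_split : ∀ f : Fin N → ℝ, ∑ i, f i = f i0 + f i1 + ∑ i ∈ Tset, f i := by
    intro f
    have h1 := Finset.sum_filter_add_sum_filter_not Finset.univ (fun i : Fin N => 2 ≤ (i : ℕ)) f
    have h2 : Finset.univ.filter (fun i : Fin N => ¬ 2 ≤ (i : ℕ)) = {i0, i1} := by
      ext a
      simp only [Finset.mem_filter, Finset.mem_univ, true_and, Finset.mem_insert,
        Finset.mem_singleton, hi0def, hi1def, Fin.ext_iff]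
      omega
    have h3 : i0 ∉ ({i1} : Finset (Fin N)) := by simpa using hne01
    rw [h2, Finset.sum_insert h3, Finset.sum_singleton] at h1
    rw [← h1, hTdef]
    ring
  -- symmetric action
  have hsymm : (Matrix.toEuclideanLin A).IsSymmetric := by
    rw [← Matrix.isHermitian_iff_isSymmetric, Matrix.IsHermitian,
      Matrix.conjTranspose_eq_transpose_of_trivial]
    exact hA
  have hAinner : ∀ (i : Fin N) (x : EuclideanSpace ℝ (Fin N)),
      ⟪B i, Matrix.toEuclideanLin A x⟫ = ev i * ⟪B i, x⟫ := by
    intro i x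
    rw [← hsymm (B i) x, heig i, real_inner_smul_left]
  -- residual bound
  have resid : ∀ (x : EuclideanSpace ℝ (Fin N)) (t : ℝ), ev i2 < t →
      (t - ev i2) ^ 2 * (∑ i ∈ Tset, ⟪B i, x⟫ ^ 2) ≤
        ‖Matrix.toEuclideanLin A x - t • x‖ ^ 2 := by
    intro x t ht
    have hx : ∀ i : Fin N, ⟪B i, Matrix.toEuclideanLin A x - t • x⟫ = (ev i - t) * ⟪B i, x⟫ := by
      intro i
      rw [inner_sub_right, real_inner_smul_right, hAinner]
      ring
    rw [normsq]
    calc (t - ev i2) ^ 2 * ∑ i ∈ Tset, ⟪B i, x⟫ ^ 2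
        = ∑ i ∈ Tset, (t - ev i2) ^ 2 * ⟪B i, x⟫ ^ 2 := Finset.mul_sum _ _ _
      _ ≤ ∑ i ∈ Tset, (ev i - t) ^ 2 * ⟪B i, x⟫ ^ 2 := by
          refine Finset.sum_le_sum fun i hi => ?_
          have h2i : (2 : ℕ) ≤ (i : ℕ) := by
            rw [hTdef] at hi
            simpa using hi
          have hle : ev i ≤ ev i2 := hev (by rw [Fin.le_def, hi2def]; exact h2i)
          have : (t - ev i2) ^ 2 ≤ (ev i - t) ^ 2 := aux_sq_le _ _ _ hle ht
          exact mul_le_mul_of_nonneg_right this (sq_nonneg _)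
      _ ≤ ∑ i, (ev i - t) ^ 2 * ⟪B i, x⟫ ^ 2 := by
          refine Finset.sum_le_sum_of_subset_of_nonneg (Finset.subset_univ _) fun i _ _ =>
            mul_nonneg (sq_nonneg _) (sq_nonneg _)
      _ = ∑ i, ⟪B i, Matrix.toEuclideanLin A x - t • x⟫ ^ 2 := by
          refine Finset.sum_congr rfl fun i _ => ?_
          rw [hx]
          ring
  -- membership helpers
  have hmem : ∀ j : Fin N, (j : ℕ) < 2 → B j ∈ W := by
    intro j hj
    rw [hW]
    exact Submodule.subset_span ⟨j, hj, rfl⟩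
  have hcases : ∀ j : Fin N, (j : ℕ) < 2 → j = i0 ∨ j = i1 := by
    intro j hj
    simp only [hi0def, hi1def, Fin.ext_iff, Fin.val_mk] at hj ⊢
    omega
  -- coordinates
  set ua : ℝ := ⟪B i0, u⟫ with huadef
  set ub : ℝ := ⟪B i1, u⟫ with hubdef
  set va : ℝ := ⟪B i0, v⟫ with hvadef
  set vb : ℝ := ⟪B i1, v⟫ with hvbdef
  -- projection formula for u
  have hP : (W.orthogonalProjection u : EuclideanSpace ℝ (Fin N)) = ua • B i0 + ub • B i1 := by
    rw [← Submodule.starProjection_apply]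
    apply Submodule.eq_starProjection_of_mem_of_inner_eq_zero
    · exact Submodule.add_mem _ (Submodule.smul_mem _ _ (hmem i0 (by simp [hi0def])))
        (Submodule.smul_mem _ _ (hmem i1 (by simp [hi1def])))
    · intro z hz
      rw [hW] at hz
      induction hz using Submodule.span_induction with
      | mem y hy =>
          obtain ⟨j, hj, rfl⟩ := hy
          rcases hcases j hj with rfl | rfl
          · rw [inner_sub_left, inner_add_left, real_inner_smul_left, real_inner_smul_left,
              hBij, hBij, if_pos rfl, if_neg (Ne.symm hne01), real_inner_comm]
            ring
          · rw [inner_sub_left, inner_add_left, real_inner_smul_left, real_inner_smul_left,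
              hBij, hBij, if_pos rfl, if_neg hne01, real_inner_comm]
            ring
      | zero => simp
      | add x y hx hy ihx ihy => rw [inner_add_right, ihx, ihy, add_zero]
      | smul a x hx ihx => rw [real_inner_smul_right, ihx, mul_zero]
  -- coordinates of w
  have hWpair : W = Submodule.span ℝ {B i0, B i1} := by
    rw [hW]
    congr 1
    ext y
    constructor
    · rintro ⟨j, hj, rfl⟩
      rcases hcases j hj with rfl | rfl
      · exact Or.inl rfl
      · exact Or.inr rfl
    · rintro (rfl | rfl)
      · exact ⟨i0, by simp [hi0def], rfl⟩
      · exact ⟨i1, by simp [hi1def], rfl⟩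
  obtain ⟨w0, w1, hw01⟩ := Submodule.mem_span_pair.mp (hWpair ▸ hwW)
  have hwB0 : ⟪B i0, w⟫ = w0 := by
    rw [← hw01, inner_add_right, real_inner_smul_right, real_inner_smul_right,
      hBij, hBij, if_pos rfl, if_neg hne01]
    ring
  have hwB1 : ⟪B i1, w⟫ = w1 := by
    rw [← hw01, inner_add_right, real_inner_smul_right, real_inner_smul_right,
      hBij, hBij, if_pos rfl, if_neg (Ne.symm hne01)]
    ring
  have hnormw : w0 ^ 2 + w1 ^ 2 = 1 := by
    have h := real_inner_self_eq_norm_sq w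
    rw [hw, one_pow] at h
    calc w0 ^ 2 + w1 ^ 2 = w0 * ⟪B i0, w⟫ + w1 * ⟪B i1, w⟫ := by rw [hwB0, hwB1]; ring
      _ = ⟪w, w⟫ := by
          conv_rhs => rw [← hw01]
          rw [inner_add_left, real_inner_smul_left, real_inner_smul_left, hw01]
      _ = 1 := h
  have hcv : ⟪w, v⟫ = w0 * va + w1 * vb := by
    rw [← hw01, inner_add_left, real_inner_smul_left, real_inner_smul_left]
  have hwu_c : w0 * ua + w1 * ub = 0 := by
    have hwB0' : ⟪w, B i0⟫ = w0 := (real_inner_comm (B i0) w).trans hwB0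
    have hwB1' : ⟪w, B i1⟫ = w1 := (real_inner_comm (B i1) w).trans hwB1
    have h1 : ⟪w, (W.orthogonalProjection u : EuclideanSpace ℝ (Fin N))⟫ = ua * w0 + ub * w1 := by
      rw [hP, inner_add_right, real_inner_smul_right, real_inner_smul_right, hwB0', hwB1']
    have h2 : ua * w0 + ub * w1 = 0 := h1.symm.trans hwu
    linarith
  -- tail quantities
  set Du : ℝ := ∑ i ∈ Tset, ⟪B i, u⟫ ^ 2 with hDudef
  set Dv : ℝ := ∑ i ∈ Tset, ⟪B i, v⟫ ^ 2 with hDvdef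
  set Cc : ℝ := ∑ i ∈ Tset, ⟪B i, u⟫ * ⟪B i, v⟫ with hCcdef
  have hDu0 : 0 ≤ Du := Finset.sum_nonneg fun i _ => sq_nonneg _
  have hDv0 : 0 ≤ Dv := Finset.sum_nonneg fun i _ => sq_nonneg _
  have hCS : Cc ^ 2 ≤ Du * Dv := Finset.sum_mul_sq_le_sq_mul_sq _ _ _
  have hnu : ua ^ 2 + ub ^ 2 + Du = 1 := by
    have h := normsq u
    rw [hu, one_pow, sum_split (fun i => ⟪B i, u⟫ ^ 2)] at h
    linarith [h]
  -- norm of v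
  set r : ℝ := (Real.sqrt N)⁻¹ with hrdef
  have hr : 0 ≤ r := inv_nonneg.mpr (Real.sqrt_nonneg _)
  have hr2 : r ^ 2 = (N:ℝ)⁻¹ := by
    rw [hrdef, inv_pow, Real.sq_sqrt hNpos.le]
  have normsq' : ∀ x : EuclideanSpace ℝ (Fin N), ‖x‖ ^ 2 = ∑ i, (x i) ^ 2 := by
    intro x
    rw [EuclideanSpace.norm_eq, Real.sq_sqrt (Finset.sum_nonneg fun i _ => sq_nonneg _)]
    simp [sq_abs]
  have hv1 : ‖v‖ = 1 := by
    have h1 : ‖v‖ ^ 2 = 1 := by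
      rw [normsq']
      have hvi : ∀ i : Fin N, (v i) ^ 2 = (N:ℝ)⁻¹ := by
        intro i
        rcases hv i with h | h <;> rw [h] <;> [exact hr2; (rw [neg_pow]; simp [hr2])]
      rw [Finset.sum_congr rfl fun i _ => hvi i]
      simp [Finset.card_univ, mul_inv_cancel₀ (ne_of_gt hNpos)]
    exact aux_norm_one _ (norm_nonneg v) h1
  have hnv : va ^ 2 + vb ^ 2 + Dv = 1 := by
    have h := normsq v
    rw [hv1, one_pow, sum_split (fun i => ⟪B i, v⟫ ^ 2)] at h
    linarith [h]
  have hcross : ua * va + ub * vb + Cc = 0 := by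
    have h := parseval u v
    rw [huv, sum_split (fun i => ⟪B i, u⟫ * ⟪B i, v⟫)] at h
    linarith [h]
  -- the sign-vector quantities
  set c : ℝ := ⟪w, v⟫ with hcdef
  set S : ℝ := ‖r • sgnVec w - v‖ ^ 2 with hSdef
  have hS0 : 0 ≤ S := sq_nonneg _
  have hentry : ∀ i : Fin N, ((r • sgnVec w - v) i) = r * sgnVec w i - v i := by
    intro i
    simp [PiLp.sub_apply, PiLp.smul_apply]
  have hS4 : S ≤ 4 := by
    rw [hSdef, normsq']
    have hbd : ∀ i : Fin N, ((r • sgnVec w - v) i) ^ 2 ≤ 4 * (N:ℝ)⁻¹ := by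
      intro i
      rw [hentry]
      have hs : sgnVec w i = 1 ∨ sgnVec w i = -1 := by
        unfold sgnVec
        simp only [WithLp.ofLp_toLp]
        split <;> simp
      refine aux_entry4 r _ _ _ hr2 ?_ (hv i)
      rcases hs with h | h <;> rw [h]
      · left; ring
      · right; ring
    calc ∑ i, ((r • sgnVec w - v) i) ^ 2 ≤ ∑ _i : Fin N, 4 * (N:ℝ)⁻¹ :=
          Finset.sum_le_sum fun i _ => hbd i
      _ = 4 := by
          rw [Finset.sum_const, Finset.card_univ, Fintype.card_fin, nsmul_eq_mul]
          field_simp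
  have hkey : c ^ 2 * S ≤ 4 * (1 - c ^ 2) := by
    have hwcv : ‖w - c • v‖ ^ 2 = 1 - c ^ 2 := by
      rw [norm_sub_sq_real, real_inner_smul_right, norm_smul, hw, hv1, ← hcdef]
      simp [sq_abs]
      ring
    have hstep : c ^ 2 * S ≤ 4 * ‖w - c • v‖ ^ 2 := by
      rw [hSdef, normsq', normsq', Finset.mul_sum, Finset.mul_sum]
      refine Finset.sum_le_sum fun i _ => ?_
      rw [hentry]
      have hsub : ((w - c • v) i) = w i - c * v i := by
        simp [PiLp.sub_apply, PiLp.smul_apply]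
      rw [hsub]
      have hs : sgnVec w i = if 0 ≤ w i then 1 else -1 := rfl
      have hsg : (sgnVec w i = 1 ∧ 0 ≤ w i) ∨ (sgnVec w i = -1 ∧ w i ≤ 0) := by
        by_cases hwi : 0 ≤ w i
        · exact Or.inl ⟨by rw [hs, if_pos hwi], hwi⟩
        · exact Or.inr ⟨by rw [hs, if_neg hwi], by push_neg at hwi; exact hwi.le⟩
      rcases hv i with h' | h' <;> rw [h']
      · exact (aux_sign c r (w i) (sgnVec w i) hwv hr hsg).1
      · exact (aux_sign c r (w i) (sgnVec w i) hwv hr hsg).2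
    rw [hwcv] at hstep
    exact hstep
  -- residual bounds
  have hLpos : (0:ℝ) < (lam - ev i2) ^ 2 := pow_pos (sub_pos.mpr hlam') 2
  have hMpos : (0:ℝ) < (mu - ev i2) ^ 2 := pow_pos (sub_pos.mpr hmu') 2
  have hDuX : Du ≤ ‖Matrix.toEuclideanLin A u - lam • u‖ ^ 2 / (lam - ev i2) ^ 2 := by
    rw [le_div_iff₀ hLpos]
    calc Du * (lam - ev i2) ^ 2 = (lam - ev i2) ^ 2 * Du := by ring
      _ ≤ _ := resid u lam hlam'
  have hDvY : Dv ≤ ‖Matrix.toEuclideanLin A v - mu • v‖ ^ 2 / (mu - ev i2) ^ 2 := by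
    rw [le_div_iff₀ hMpos]
    calc Dv * (mu - ev i2) ^ 2 = (mu - ev i2) ^ 2 * Dv := by ring
      _ ≤ _ := resid v mu hmu'
  set X : ℝ := ‖Matrix.toEuclideanLin A u - lam • u‖ ^ 2 / (lam - ev i2) ^ 2 with hXdef
  set Y : ℝ := ‖Matrix.toEuclideanLin A v - mu • v‖ ^ 2 / (mu - ev i2) ^ 2 with hYdef
  have hX0 : 0 ≤ X := div_nonneg (sq_nonneg _) (sq_nonneg _)
  have hY0 : 0 ≤ Y := div_nonneg (sq_nonneg _) (sq_nonneg _)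
  show (1 / 4) * S ≤ 8 * (X + Y)
  -- orthogonal decomposition identities in the 2-dimensional space
  have hs0 : ua = -(ub * w0 - ua * w1) * w1 := by
    linear_combination w0 * hwu_c - ua * hnormw
  have hs1 : ub = (ub * w0 - ua * w1) * w0 := by
    linear_combination w1 * hwu_c - ub * hnormw
  have hb2 : (w1 * va - w0 * vb) ^ 2 * (ua ^ 2 + ub ^ 2) = (ua * va + ub * vb) ^ 2 := by
    obtain ⟨σ, hσ0, hσ1⟩ : ∃ σ : ℝ, ua = -σ * w1 ∧ ub = σ * w0 := ⟨_, hs0, hs1⟩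
    rw [hσ0, hσ1]
    linear_combination ((w1 * va - w0 * vb) ^ 2 * σ ^ 2) * hnormw
  have hkb : (w1 * va - w0 * vb) ^ 2 + c ^ 2 = 1 - Dv := by
    rw [hcv]
    linear_combination (va ^ 2 + vb ^ 2) * hnormw + hnv
  have hb2' : (w1 * va - w0 * vb) ^ 2 * (1 - Du) ≤ Du * Dv := by
    have hCc' : (ua * va + ub * vb) ^ 2 = Cc ^ 2 := by
      have h9 : ua * va + ub * vb = -Cc := by linarith
      rw [h9]
      ring
    calc (w1 * va - w0 * vb) ^ 2 * (1 - Du)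
        = (w1 * va - w0 * vb) ^ 2 * (ua ^ 2 + ub ^ 2) := by
          rw [show (1:ℝ) - Du = ua ^ 2 + ub ^ 2 by linarith]
      _ = (ua * va + ub * vb) ^ 2 := hb2
      _ = Cc ^ 2 := hCc'
      _ ≤ Du * Dv := hCS
  exact aux_endgame S c _ Du Dv X Y hS0 hS4 hkey hkb hb2' (sq_nonneg _) hDu0 hDv0
    hDuX hDvY hX0 hY0
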